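/- Define the sequence of ordinals γ : ℕ → Ordinal by γ(0) = 0 and γ(n+1) = φ_{γ(n)}(0), and let Γ₀ = sup over n of γ(n). Then φ_{Γ₀}(0) = Γ₀, and Γ₀ is the least ordinal with this property: for every ordinal x with φ_x(0) = x one has Γ₀ ≤ x. -/

import Mathlib

noncomputable def veblen (o : Ordinal.{0}) : Ordinal.{0} → Ordinal.{0} :=
  if o = 0 then fun b => Ordinal.omega0 ^ b
  else Ordinal.derivFamily fun x : Set.Iio o => veblen x.1
termination_by o
decreasing_by exact x.2

/-- γ 0 = 0 and γ (n+1) = φ_{γ n}(0). -/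
noncomputable def gammaSeq : ℕ → Ordinal.{0}
  | 0 => 0
  | n + 1 => veblen (gammaSeq n) 0

/-- The Feferman–Schütte ordinal Γ₀ = sup_n γ_n. -/
noncomputable def Gamma0 : Ordinal.{0} := ⨆ n : ℕ, gammaSeq n

open Ordinal hiding veblen
open Set

theorem veblen_zero' : veblen 0 = fun b => omega0 ^ b := by
  rw [veblen]; simp

theorem veblen_pos' {o : Ordinal} (h : o ≠ 0) :
    veblen o = Ordinal.derivFamily fun x : Set.Iio o => veblen x.1 := by
  rw [veblen]; simp [h]

theorem veblen_isNormal (o : Ordinal) : Order.IsNormal (veblen o) := by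
  rcases eq_or_ne o 0 with rfl | h
  · rw [veblen_zero']
    exact isNormal_opow one_lt_omega0
  · rw [veblen_pos' h]
    exact isNormal_derivFamily _

theorem veblen_fp {a o : Ordinal} (h : a < o) (b : Ordinal) :
    veblen a (veblen o b) = veblen o b := by
  have ho : o ≠ 0 := fun e => by subst e; exact (not_lt_of_ge (zero_le : 0 ≤ a)) h
  rw [veblen_pos' ho]
  exact derivFamily_fp (f := fun x : Set.Iio o => veblen x.1) (i := ⟨a, h⟩) (veblen_isNormal a) b

theorem le_veblen_self (a : Ordinal) : a ≤ veblen a 0 := by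
  by_contra hlt
  push_neg at hlt
  set x := veblen a 0 with hxdef
  have hx : x < a := hlt
  have h1 : x ≤ veblen x 0 := le_veblen_self x
  have hxx : veblen x x = x := veblen_fp hx 0
  have h2 : veblen x 0 ≤ x := by
    calc veblen x 0 ≤ veblen x x := (veblen_isNormal x).monotone zero_le
      _ = x := hxx
  have hxeq : veblen x 0 = x := le_antisymm h2 h1
  have hx0 : x ≠ 0 := by
    intro e
    rw [e, veblen_zero'] at hxeq
    simp at hxeq
  have hs : veblen x 0 < veblen x x :=
    (veblen_isNormal x).strictMono (pos_iff_ne_zero.2 hx0)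
  rw [hxeq, hxx] at hs
  exact lt_irrefl x hs
termination_by a
decreasing_by exact hx

theorem gammaSeq_mono : Monotone gammaSeq :=
  monotone_nat_of_le_succ fun n => le_veblen_self _

theorem gammaSeq_le_gamma0 (n : ℕ) : gammaSeq n ≤ Gamma0 :=
  Ordinal.le_iSup gammaSeq n

theorem gamma0_ne_zero : Gamma0 ≠ 0 := by
  intro h
  have h1 : gammaSeq 1 ≤ Gamma0 := gammaSeq_le_gamma0 1
  have : gammaSeq 1 = 1 := by
    show veblen (gammaSeq 0) 0 = 1
    show veblen 0 0 = 1
    rw [veblen_zero']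
    simp
  rw [this, h] at h1
  exact absurd h1 (by simp)

theorem veblen_gamma0_fixed_and_least :
    veblen Gamma0 0 = Gamma0 ∧ ∀ x : Ordinal, veblen x 0 = x → Gamma0 ≤ x := by
  constructor
  · apply le_antisymm
    · -- veblen Gamma0 0 ≤ Gamma0: Gamma0 is a common fixed point
      rw [veblen_pos' gamma0_ne_zero, derivFamily_zero]
      apply nfpFamily_le_fp (f := fun x : Set.Iio Gamma0 => veblen x.1)
        (fun i => (veblen_isNormal i.1).monotone) zero_le
      rintro ⟨a, ha⟩
      obtain ⟨N, hN⟩ := Ordinal.lt_iSup_iff.1 ha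
      show veblen a Gamma0 ≤ Gamma0
      rw [show Gamma0 = ⨆ n : ℕ, gammaSeq n from rfl, (veblen_isNormal a).map_iSup bddAbove_of_small]
      apply Ordinal.iSup_le
      intro m
      have hfix : veblen a (gammaSeq (max m N + 1)) = gammaSeq (max m N + 1) := by
        have : a < gammaSeq (max m N) := hN.trans_le (gammaSeq_mono (le_max_right m N))
        exact veblen_fp this 0
      calc veblen a (gammaSeq m)
          ≤ veblen a (gammaSeq (max m N + 1)) := by
            exact (veblen_isNormal a).monotone
              (gammaSeq_mono ((le_max_left m N).trans (Nat.le_succ _)))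
        _ = gammaSeq (max m N + 1) := hfix
        _ ≤ Gamma0 := gammaSeq_le_gamma0 _
    · -- Gamma0 ≤ veblen Gamma0 0
      apply Ordinal.iSup_le
      intro n
      induction n with
      | zero => exact zero_le
      | succ n IH =>
        show veblen (gammaSeq n) 0 ≤ veblen Gamma0 0
        rcases lt_or_eq_of_le (gammaSeq_le_gamma0 n) with h | h
        · calc veblen (gammaSeq n) 0
              ≤ veblen (gammaSeq n) (veblen Gamma0 0) :=
                (veblen_isNormal _).monotone zero_le
            _ = veblen Gamma0 0 := veblen_fp h 0
        · rw [h]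
  · intro x hx
    have hx0 : x ≠ 0 := by
      intro e
      rw [e, veblen_zero'] at hx
      simp at hx
    apply Ordinal.iSup_le
    intro n
    induction n with
    | zero => exact zero_le
    | succ n IH =>
      show veblen (gammaSeq n) 0 ≤ x
      rcases lt_or_eq_of_le IH with h | h
      · calc veblen (gammaSeq n) 0
            ≤ veblen (gammaSeq n) x := (veblen_isNormal _).monotone zero_le
          _ = x := by have := veblen_fp h 0; rwa [hx] at this
      · rw [h, hx]
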